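/- Let H_0, H_1 be real symmetric n×n matrices satisfying the hypotheses of the comparison lemma (ground state representations with vectors u_0, u_1 and coefficient bound c^{(1)} ≤ β_-^{-1} c^{(0)}), let V be a diagonal matrix with nonpositive entries, and β = β_+/β_- with β_± the max/min of (u_{0,i}/u_{1,i})^2. Then for every j, the j-th smallest eigenvalue of H_1 + βV is at most the j-th smallest eigenvalue of H_0 + V whenever the latter is negative; more precisely, min(0, λ_j(H_1+βV)) ≤ min(0, λ_j(H_0+V)), where λ_j denotes the j-th smallest eigenvalue. -/

import Mathlib

open Matrix

/-- The `j`-th smallest eigenvalue of a Hermitian matrix (eigenvalues sorted in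
increasing order). -/
noncomputable def sortedEigAsc {n : ℕ} {M : Matrix (Fin n) (Fin n) ℝ}
    (hM : M.IsHermitian) : Fin n → ℝ :=
  hM.eigenvalues ∘ Tuple.sort hM.eigenvalues

open Finset

section Helpers

variable {n : ℕ}

noncomputable def evec {M : Matrix (Fin n) (Fin n) ℝ} (hM : M.IsHermitian) :
    Fin n → (Fin n → ℝ) := fun k => ⇑(hM.eigenvectorBasis k)

lemma evec_mulVec {M : Matrix (Fin n) (Fin n) ℝ} (hM : M.IsHermitian) (k : Fin n) :
    M *ᵥ evec hM k = hM.eigenvalues k • evec hM k := hM.mulVec_eigenvectorBasis k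

lemma evec_dot {M : Matrix (Fin n) (Fin n) ℝ} (hM : M.IsHermitian) (k l : Fin n) :
    evec hM k ⬝ᵥ evec hM l = if k = l then 1 else 0 := by
  have h := hM.eigenvectorBasis.orthonormal
  rw [orthonormal_iff_ite] at h
  have h2 := h k l
  simp only [PiLp.inner_apply, RCLike.inner_apply, conj_trivial] at h2
  rw [← h2]
  exact Finset.sum_congr rfl fun i _ => mul_comm _ _


lemma my_sum_dot {S : Finset (Fin n)} (f : Fin n → (Fin n → ℝ)) (y : Fin n → ℝ) :
    (∑ k ∈ S, f k) ⬝ᵥ y = ∑ k ∈ S, f k ⬝ᵥ y := by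
  induction S using Finset.cons_induction with
  | empty => simp
  | cons k S hk ih => simp [Finset.sum_insert hk, add_dotProduct, ih]

lemma my_dot_sum {S : Finset (Fin n)} (y : Fin n → ℝ) (f : Fin n → (Fin n → ℝ)) :
    y ⬝ᵥ (∑ k ∈ S, f k) = ∑ k ∈ S, y ⬝ᵥ f k := by
  induction S using Finset.cons_induction with
  | empty => simp
  | cons k S hk ih => simp [Finset.sum_insert hk, dotProduct_add, ih]

lemma my_mulVec_sum {S : Finset (Fin n)} (M : Matrix (Fin n) (Fin n) ℝ)
    (f : Fin n → (Fin n → ℝ)) : M *ᵥ (∑ k ∈ S, f k) = ∑ k ∈ S, M *ᵥ f k := by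
  simpa only [Matrix.mulVecLin_apply] using map_sum M.mulVecLin f S

lemma mem_span_evec {M : Matrix (Fin n) (Fin n) ℝ} (hM : M.IsHermitian) (S : Finset (Fin n))
    {ψ : Fin n → ℝ} (hψ : ψ ∈ Submodule.span ℝ (evec hM '' S)) :
    ∃ a : Fin n → ℝ, ψ = ∑ k ∈ S, a k • evec hM k := by
  induction hψ using Submodule.span_induction with
  | mem x hx =>
    obtain ⟨k, hk, rfl⟩ := hx
    exact ⟨fun l => if l = k then 1 else 0, by
      rw [Finset.sum_eq_single_of_mem k hk] <;> simp +contextual⟩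
  | zero => exact ⟨0, by simp⟩
  | add x y _ _ hx hy =>
    obtain ⟨a, rfl⟩ := hx; obtain ⟨b, rfl⟩ := hy
    exact ⟨a + b, by simp [add_smul, Finset.sum_add_distrib]⟩
  | smul c x _ hx =>
    obtain ⟨a, rfl⟩ := hx
    exact ⟨c • a, by simp [Finset.smul_sum, smul_smul]⟩

lemma quad_expansion {M : Matrix (Fin n) (Fin n) ℝ} (hM : M.IsHermitian) (S : Finset (Fin n))
    {ψ : Fin n → ℝ} (hψ : ψ ∈ Submodule.span ℝ (evec hM '' S)) :
    ∃ a : Fin n → ℝ, ψ ⬝ᵥ M *ᵥ ψ = ∑ k ∈ S, hM.eigenvalues k * a k ^ 2 ∧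
      ψ ⬝ᵥ ψ = ∑ k ∈ S, a k ^ 2 := by
  obtain ⟨a, rfl⟩ := mem_span_evec hM S hψ
  refine ⟨a, ?_, ?_⟩
  · have hmv : M *ᵥ (∑ k ∈ S, a k • evec hM k) =
        ∑ k ∈ S, (a k * hM.eigenvalues k) • evec hM k := by
      rw [my_mulVec_sum]
      refine Finset.sum_congr rfl fun k _ => ?_
      rw [Matrix.mulVec_smul, evec_mulVec, smul_smul]
    rw [hmv, my_sum_dot]
    refine Finset.sum_congr rfl fun k hk => ?_
    rw [smul_dotProduct, my_dot_sum,
      Finset.sum_eq_single_of_mem k hk (fun l hl hne => by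
        simp [dotProduct_smul, evec_dot, hne.symm])]
    simp only [dotProduct_smul, evec_dot, if_pos rfl, if_true, smul_eq_mul, mul_one]
    ring
  · rw [my_sum_dot]
    refine Finset.sum_congr rfl fun k hk => ?_
    rw [smul_dotProduct, my_dot_sum,
      Finset.sum_eq_single_of_mem k hk (fun l hl hne => by
        simp [dotProduct_smul, evec_dot, hne.symm])]
    simp only [dotProduct_smul, evec_dot, if_pos rfl, if_true, smul_eq_mul, mul_one]
    ring

lemma evec_li {M : Matrix (Fin n) (Fin n) ℝ} (hM : M.IsHermitian) :
    LinearIndependent ℝ (evec hM) := by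
  rw [Fintype.linearIndependent_iff]
  intro g hg k
  have := congrArg (fun v => v ⬝ᵥ evec hM k) hg
  simpa [my_sum_dot, smul_dotProduct, evec_dot, Finset.sum_ite_eq'] using this

lemma finrank_span_evec {M : Matrix (Fin n) (Fin n) ℝ} (hM : M.IsHermitian)
    (S : Finset (Fin n)) :
    Module.finrank ℝ (Submodule.span ℝ (evec hM '' S)) = S.card := by
  rw [Set.image_eq_range]
  have h := finrank_span_eq_card (R := ℝ)
    ((evec_li hM).comp ((↑) : ↥(↑S : Set (Fin n)) → Fin n) Subtype.val_injective)
  simpa [Function.comp_def] using h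

lemma sortedEigAsc_mono {M : Matrix (Fin n) (Fin n) ℝ} (hM : M.IsHermitian) :
    Monotone (sortedEigAsc hM) := Tuple.monotone_sort hM.eigenvalues

/-- Courant–Fischer upper bound: a `j+1`-dimensional subspace on which the form is `≤ t`
forces the `j`-th eigenvalue to be `≤ t`. -/
lemma minmax_le {M : Matrix (Fin n) (Fin n) ℝ} (hM : M.IsHermitian) (j : Fin n)
    (W : Submodule ℝ (Fin n → ℝ)) (hdim : (j : ℕ) + 1 ≤ Module.finrank ℝ W)
    (t : ℝ) (hW : ∀ ψ ∈ W, ψ ⬝ᵥ M *ᵥ ψ ≤ t * (ψ ⬝ᵥ ψ)) :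
    sortedEigAsc hM j ≤ t := by
  classical
  set S : Finset (Fin n) := (Finset.Ici j).image (Tuple.sort hM.eigenvalues) with hS
  set U := Submodule.span ℝ (evec hM '' S) with hU
  have hcard : S.card = n - j := by
    rw [hS, Finset.card_image_of_injective _ (Tuple.sort hM.eigenvalues).injective,
      Fin.card_Ici]
  have hUrank : Module.finrank ℝ U = n - j := by rw [hU, finrank_span_evec, hcard]
  -- intersection is nontrivial
  have hinf : 0 < Module.finrank ℝ ↥(W ⊓ U) := by
    by_contra h
    push_neg at h
    have h0 : Module.finrank ℝ ↥(W ⊓ U) = 0 := Nat.le_zero.mp h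
    have hsum := Submodule.finrank_sup_add_finrank_inf_eq W U
    have hle : Module.finrank ℝ ↥(W ⊔ U) ≤ n := by
      simpa [Module.finrank_fintype_fun_eq_card] using (W ⊔ U).finrank_le
    have hjn : (j : ℕ) < n := j.isLt
    omega
  obtain ⟨φ, hφmem, hφne⟩ : ∃ φ, φ ∈ W ⊓ U ∧ φ ≠ 0 := by
    refine Submodule.exists_mem_ne_zero_of_ne_bot fun hbot => ?_
    rw [hbot] at hinf
    simp at hinf
  have hφU : φ ∈ U := hφmem.2
  obtain ⟨a, hq, hn⟩ := quad_expansion hM S hφU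
  have hquad : sortedEigAsc hM j * (φ ⬝ᵥ φ) ≤ φ ⬝ᵥ M *ᵥ φ := by
    rw [hq, hn, Finset.mul_sum]
    refine Finset.sum_le_sum fun k hk => ?_
    obtain ⟨m, hm, rfl⟩ := Finset.mem_image.mp hk
    have : sortedEigAsc hM j ≤ hM.eigenvalues (Tuple.sort hM.eigenvalues m) :=
      sortedEigAsc_mono hM (Finset.mem_Ici.mp hm)
    nlinarith [sq_nonneg (a (Tuple.sort hM.eigenvalues m))]
  have hpos : 0 < φ ⬝ᵥ φ := by
    have h0 : (0:ℝ) ≤ φ ⬝ᵥ φ := Finset.sum_nonneg fun i _ => mul_self_nonneg _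
    exact h0.lt_of_ne (Ne.symm (dotProduct_self_eq_zero.not.mpr hφne))
  have := (hquad.trans (hW φ hφmem.1))
  exact le_of_mul_le_mul_right (by linarith) hpos

lemma exists_low_subspace {M : Matrix (Fin n) (Fin n) ℝ} (hM : M.IsHermitian) (j : Fin n) :
    ∃ W : Submodule ℝ (Fin n → ℝ), Module.finrank ℝ W = (j : ℕ) + 1 ∧
      ∀ ψ ∈ W, ψ ⬝ᵥ M *ᵥ ψ ≤ sortedEigAsc hM j * (ψ ⬝ᵥ ψ) := by
  classical
  set S : Finset (Fin n) := (Finset.Iic j).image (Tuple.sort hM.eigenvalues) with hS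
  refine ⟨Submodule.span ℝ (evec hM '' S), ?_, ?_⟩
  · rw [finrank_span_evec, hS,
      Finset.card_image_of_injective _ (Tuple.sort hM.eigenvalues).injective, Fin.card_Iic]
  · intro ψ hψ
    obtain ⟨a, hq, hn⟩ := quad_expansion hM S hψ
    rw [hq, hn, Finset.mul_sum]
    refine Finset.sum_le_sum fun k hk => ?_
    obtain ⟨m, hm, rfl⟩ := Finset.mem_image.mp hk
    have : hM.eigenvalues (Tuple.sort hM.eigenvalues m) ≤ sortedEigAsc hM j :=
      sortedEigAsc_mono hM (Finset.mem_Iic.mp hm)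
    nlinarith [sq_nonneg (a (Tuple.sort hM.eigenvalues m))]

lemma quadV {V : Fin n → ℝ} (x : Fin n → ℝ) :
    x ⬝ᵥ (Matrix.diagonal V) *ᵥ x = ∑ i, V i * x i ^ 2 :=
  Finset.sum_congr rfl fun i _ => by rw [Matrix.mulVec_diagonal]; ring


end Helpers

/-- Finite-dimensional version of Theorem 2.1: eigenvalue comparison of
`H₀ + V` and `H₁ + βV` under ground state representations. -/
theorem eigenvalue_comparison {n : ℕ} (H0 H1 : Matrix (Fin n) (Fin n) ℝ)
    (hH0 : H0.IsSymm) (hH1 : H1.IsSymm)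
    (u0 u1 : Fin n → ℝ) (hu0 : ∀ i, 0 < u0 i) (hu1 : ∀ i, 0 < u1 i)
    (c0 c1 : Fin n → Fin n → ℝ)
    (hc0 : ∀ i j, 0 ≤ c0 i j) (hc1 : ∀ i j, 0 ≤ c1 i j)
    (hrep0 : ∀ f : Fin n → ℝ,
      (fun i => f i * u0 i) ⬝ᵥ H0 *ᵥ (fun i => f i * u0 i) =
        (1 / 2) * ∑ i, ∑ j, c0 i j * (f i - f j) ^ 2)
    (hrep1 : ∀ f : Fin n → ℝ,
      (fun i => f i * u1 i) ⬝ᵥ H1 *ᵥ (fun i => f i * u1 i) =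
        (1 / 2) * ∑ i, ∑ j, c1 i j * (f i - f j) ^ 2)
    (βm βp : ℝ)
    (hβm : IsLeast (Set.range fun i => (u0 i / u1 i) ^ 2) βm)
    (hβp : IsGreatest (Set.range fun i => (u0 i / u1 i) ^ 2) βp)
    (hcc : ∀ i j, c1 i j ≤ βm⁻¹ * c0 i j)
    (V : Fin n → ℝ) (hV : ∀ i, V i ≤ 0)
    (hA : (H0 + Matrix.diagonal V).IsHermitian)
    (hB : (H1 + (βp / βm) • Matrix.diagonal V).IsHermitian) :
    ∀ j : Fin n, min 0 (sortedEigAsc hB j) ≤ min 0 (sortedEigAsc hA j) := by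
  intro j
  rcases le_or_gt 0 (sortedEigAsc hA j) with h0 | h0
  · calc min 0 (sortedEigAsc hB j) ≤ 0 := min_le_left _ _
      _ = min 0 (sortedEigAsc hA j) := (min_eq_left h0).symm
  -- preliminaries
  have hβm_pos : 0 < βm := by
    obtain ⟨i, hi⟩ := hβm.1
    have h1 := hu0 i; have h2 := hu1 i
    rw [← hi]; positivity
  have hβm_le : ∀ i, βm ≤ (u0 i / u1 i) ^ 2 := fun i => hβm.2 ⟨i, rfl⟩
  have hβp_ge : ∀ i, (u0 i / u1 i) ^ 2 ≤ βp := fun i => hβp.2 ⟨i, rfl⟩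
  set d : Fin n → ℝ := fun i => u1 i / u0 i with hd
  have hd_pos : ∀ i, 0 < d i := fun i => div_pos (hu1 i) (hu0 i)
  have hd2 : ∀ i, (u0 i / u1 i) ^ 2 * d i ^ 2 = 1 := fun i => by
    rw [hd, ← mul_pow, div_mul_div_comm, mul_comm (u0 i), div_self (mul_pos (hu1 i) (hu0 i)).ne', one_pow]
  set L : (Fin n → ℝ) ≃ₗ[ℝ] (Fin n → ℝ) :=
    { toFun := fun ψ i => d i * ψ i
      invFun := fun φ i => φ i / d i
      map_add' := fun ψ φ => by funext i; simp [Pi.add_apply]; ring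
      map_smul' := fun c ψ => by funext i; simp [Pi.smul_apply, smul_eq_mul]; ring
      left_inv := fun ψ => by
        funext i; exact mul_div_cancel_left₀ _ (hd_pos i).ne'
      right_inv := fun φ => by
        funext i; exact mul_div_cancel₀ _ (hd_pos i).ne' } with hL
  have hLapp : ∀ (ψ : Fin n → ℝ) (i : Fin n), L ψ i = d i * ψ i := fun ψ i => rfl
  -- the key quadratic form comparison
  have key : ∀ ψ : Fin n → ℝ,
      (L ψ) ⬝ᵥ (H1 + (βp / βm) • Matrix.diagonal V) *ᵥ (L ψ) ≤
        βm⁻¹ * (ψ ⬝ᵥ (H0 + Matrix.diagonal V) *ᵥ ψ) ∧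
      (L ψ) ⬝ᵥ (L ψ) ≤ βm⁻¹ * (ψ ⬝ᵥ ψ) := by
    intro ψ
    set f : Fin n → ℝ := fun i => ψ i / u0 i with hf
    have hψeq : ψ = fun i => f i * u0 i := funext fun i => by
      rw [hf]; show ψ i = ψ i / u0 i * u0 i; exact (div_mul_cancel₀ _ (hu0 i).ne').symm
    have hLψeq : (L ψ : Fin n → ℝ) = fun i => f i * u1 i := funext fun i => by
      rw [hLapp, hf, hd]; field_simp
    have hH0' : ψ ⬝ᵥ H0 *ᵥ ψ = (1 / 2) * ∑ i, ∑ j, c0 i j * (f i - f j) ^ 2 := by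
      rw [hψeq]; exact hrep0 f
    have hH1' : (L ψ) ⬝ᵥ H1 *ᵥ (L ψ) = (1 / 2) * ∑ i, ∑ j, c1 i j * (f i - f j) ^ 2 := by
      rw [hLψeq]; exact hrep1 f
    have hHpart : (L ψ) ⬝ᵥ H1 *ᵥ (L ψ) ≤ βm⁻¹ * (ψ ⬝ᵥ H0 *ᵥ ψ) := by
      rw [hH0', hH1']
      have hsum : ∑ i, ∑ j, c1 i j * (f i - f j) ^ 2 ≤
          ∑ i, ∑ j, βm⁻¹ * c0 i j * (f i - f j) ^ 2 :=
        Finset.sum_le_sum fun i _ => Finset.sum_le_sum fun j _ =>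
          mul_le_mul_of_nonneg_right (hcc i j) (sq_nonneg _)
      have heq : βm⁻¹ * ((1 / 2) * ∑ i, ∑ j, c0 i j * (f i - f j) ^ 2) =
          (1 / 2) * ∑ i, ∑ j, βm⁻¹ * c0 i j * (f i - f j) ^ 2 := by
        simp only [Finset.mul_sum]
        exact Finset.sum_congr rfl fun i _ => Finset.sum_congr rfl fun j _ => by ring
      rw [heq]
      linarith
    have hVpart : (L ψ) ⬝ᵥ ((βp / βm) • Matrix.diagonal V) *ᵥ (L ψ) ≤
        βm⁻¹ * (ψ ⬝ᵥ (Matrix.diagonal V) *ᵥ ψ) := by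
      rw [Matrix.smul_mulVec, dotProduct_smul, quadV, quadV, smul_eq_mul,
        Finset.mul_sum, Finset.mul_sum]
      refine Finset.sum_le_sum fun i _ => ?_
      rw [hLapp]
      have h1 : (u0 i / u1 i) ^ 2 ≤ βp := hβp_ge i
      have h1' : 1 ≤ βp * d i ^ 2 := by
        nlinarith [mul_le_mul_of_nonneg_right h1 (sq_nonneg (d i)), hd2 i]
      have hVt : V i * ψ i ^ 2 ≤ 0 := mul_nonpos_of_nonpos_of_nonneg (hV i) (sq_nonneg _)
      have h2 : βp * d i ^ 2 * (V i * ψ i ^ 2) ≤ 1 * (V i * ψ i ^ 2) :=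
        mul_le_mul_of_nonpos_right h1' hVt
      calc βp / βm * (V i * (d i * ψ i) ^ 2)
          = βm⁻¹ * (βp * d i ^ 2 * (V i * ψ i ^ 2)) := by rw [div_eq_mul_inv]; ring
        _ ≤ βm⁻¹ * (1 * (V i * ψ i ^ 2)) :=
            mul_le_mul_of_nonneg_left h2 (inv_nonneg.mpr hβm_pos.le)
        _ = βm⁻¹ * (V i * ψ i ^ 2) := by ring
    have hnorm : (L ψ) ⬝ᵥ (L ψ) ≤ βm⁻¹ * (ψ ⬝ᵥ ψ) := by
      have : ∀ i, L ψ i * L ψ i ≤ βm⁻¹ * (ψ i * ψ i) := by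
        intro i
        rw [hLapp]
        have hb : βm * d i ^ 2 ≤ 1 := by
          nlinarith [mul_le_mul_of_nonneg_right (hβm_le i) (sq_nonneg (d i)), hd2 i]
        have hexp : βm⁻¹ * (ψ i ^ 2 * (1 - βm * d i ^ 2)) =
            βm⁻¹ * (ψ i * ψ i) - d i * ψ i * (d i * ψ i) := by
          field_simp
        have hnn : 0 ≤ βm⁻¹ * (ψ i ^ 2 * (1 - βm * d i ^ 2)) :=
          mul_nonneg (inv_nonneg.mpr hβm_pos.le)
            (mul_nonneg (sq_nonneg _) (by linarith))
        linarith [hexp ▸ hnn]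
      calc (L ψ) ⬝ᵥ (L ψ) = ∑ i, L ψ i * L ψ i := rfl
        _ ≤ ∑ i, βm⁻¹ * (ψ i * ψ i) := Finset.sum_le_sum fun i _ => this i
        _ = βm⁻¹ * (ψ ⬝ᵥ ψ) := (Finset.mul_sum _ _ _).symm
    refine ⟨?_, hnorm⟩
    rw [Matrix.add_mulVec, dotProduct_add, Matrix.add_mulVec, dotProduct_add, mul_add]
    exact add_le_add hHpart hVpart
  -- assemble
  obtain ⟨W0, hW0rank, hW0⟩ := exists_low_subspace hA j
  set W : Submodule ℝ (Fin n → ℝ) := W0.map (L : (Fin n → ℝ) →ₗ[ℝ] (Fin n → ℝ)) with hW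
  have hWrank : Module.finrank ℝ W = (j : ℕ) + 1 := by
    rw [hW, LinearEquiv.finrank_map_eq, hW0rank]
  have hBle : sortedEigAsc hB j ≤ sortedEigAsc hA j := by
    refine minmax_le hB j W (le_of_eq hWrank.symm) _ fun φ hφ => ?_
    obtain ⟨ψ, hψ, rfl⟩ := Submodule.mem_map.mp hφ
    calc (L ψ) ⬝ᵥ (H1 + (βp / βm) • Matrix.diagonal V) *ᵥ (L ψ)
        ≤ βm⁻¹ * (ψ ⬝ᵥ (H0 + Matrix.diagonal V) *ᵥ ψ) := (key ψ).1
      _ ≤ βm⁻¹ * (sortedEigAsc hA j * (ψ ⬝ᵥ ψ)) :=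
          mul_le_mul_of_nonneg_left (hW0 ψ hψ) (inv_nonneg.mpr hβm_pos.le)
      _ = sortedEigAsc hA j * (βm⁻¹ * (ψ ⬝ᵥ ψ)) := by ring
      _ ≤ sortedEigAsc hA j * ((L ψ) ⬝ᵥ (L ψ)) :=
          mul_le_mul_of_nonpos_left (key ψ).2 h0.le
  calc min 0 (sortedEigAsc hB j) ≤ sortedEigAsc hB j := min_le_right _ _
    _ ≤ sortedEigAsc hA j := hBle
    _ = min 0 (sortedEigAsc hA j) := (min_eq_right h0.le).symm
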